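/- Let Phi be a root system with simple system Delta and I ⊆ Delta, and let delta_P be the sum of positive roots not in the span of I. For every beta in Phi^+ \ span(I), one has <delta_P, beta^vee> > 0. -/

import Mathlib

noncomputable section
open scoped RealInnerProductSpace Classical
open Finset

/-- A (crystallographic) root system in a real inner product space `V`, together with a choice of
simple roots: `Φ` is the finite set of roots, `Δ ⊆ Φ` a system of simple roots. Roots are nonzero,
`Φ` is stable under the reflections it defines, pairings `⟨β,α∨⟩ = 2⟪β,α⟫/⟪α,α⟫` are integers,
the simple roots are linearly independent and span, and every root is a nonnegative or nonpositive
combination of simple roots. -/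
structure RootSystemData (V : Type*) [NormedAddCommGroup V] [InnerProductSpace ℝ V] where
  Φ : Finset V
  Δ : Finset V
  zero_not_mem : (0 : V) ∉ Φ
  simple_subset : Δ ⊆ Φ
  simple_indep : LinearIndependent ℝ (fun a : (Δ : Set V) => (a : V))
  span_eq : Submodule.span ℝ (Φ : Set V) = ⊤
  reflect_mem : ∀ α ∈ Φ, ∀ β ∈ Φ, β - (2 * ⟪β, α⟫ / ⟪α, α⟫) • α ∈ Φ
  crystal : ∀ α ∈ Φ, ∀ β ∈ Φ, ∃ n : ℤ, (n : ℝ) = 2 * ⟪β, α⟫ / ⟪α, α⟫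
  decomp : ∀ α ∈ Φ, (∃ c : V → ℝ, (∀ v, 0 ≤ c v) ∧ α = ∑ a ∈ Δ, c a • a) ∨
    (∃ c : V → ℝ, (∀ v, 0 ≤ c v) ∧ α = -∑ a ∈ Δ, c a • a)

variable {V : Type*} [NormedAddCommGroup V] [InnerProductSpace ℝ V]

/-- The pairing `⟨x, α∨⟩ = 2⟪x,α⟫/⟪α,α⟫` with the coroot of `α`. -/
def pr (x α : V) : ℝ := 2 * ⟪x, α⟫ / ⟪α, α⟫

/-- The positive roots: roots which are nonnegative combinations of the simple roots. -/
def RootSystemData.pos (R : RootSystemData V) : Finset V :=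
  R.Φ.filter fun α => ∃ c : V → ℝ, (∀ v, 0 ≤ c v) ∧ α = ∑ a ∈ R.Δ, c a • a

/-- `δ⁺`, the half-sum of the positive roots. -/
def RootSystemData.deltaPlus (R : RootSystemData V) : V := (2 : ℝ)⁻¹ • ∑ α ∈ R.pos, α

/-- `δ_P`, the sum of the positive roots not lying in the span of `I`. -/
def RootSystemData.deltaP (R : RootSystemData V) (I : Finset V) : V :=
  ∑ β ∈ R.pos.filter (fun b => b ∉ Submodule.span ℝ (I : Set V)), β

/-- The Weyl group: the subgroup of the orthogonal group of `V` generated by the reflections in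
the hyperplanes orthogonal to the roots. -/
def RootSystemData.weyl [FiniteDimensional ℝ V] (R : RootSystemData V) :
    Subgroup (V ≃ₗᵢ[ℝ] V) :=
  Subgroup.closure { w | ∃ α ∈ R.Φ, w = Submodule.reflection (ℝ ∙ α)ᗮ }

namespace RootSystemData

/-- Uniqueness of coefficients with respect to the simple roots. -/
lemma coeff_unique (R : RootSystemData V) {c d : V → ℝ}
    (h : ∑ a ∈ R.Δ, c a • a = ∑ a ∈ R.Δ, d a • a) : ∀ a ∈ R.Δ, c a = d a := by
  intro a ha
  have hli := Fintype.linearIndependent_iff.mp R.simple_indep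
  have key : ∀ i : (R.Δ : Set V), c i - d i = 0 := by
    intro i
    refine hli (fun j => c j - d j) ?_ i
    have e : ∑ j : (R.Δ : Set V), (c j - d j) • (j : V)
        = ∑ j ∈ R.Δ, (c j - d j) • j := Finset.sum_coe_sort R.Δ (fun j => (c j - d j) • j)
    rw [e]
    simp only [sub_smul, Finset.sum_sub_distrib, h, sub_self]
  have := key ⟨a, ha⟩
  linarith

lemma root_ne_zero (R : RootSystemData V) {α : V} (hα : α ∈ R.Φ) : α ≠ 0 :=
  fun h => R.zero_not_mem (h ▸ hα)

lemma inner_self_pos' (R : RootSystemData V) {α : V} (hα : α ∈ R.Φ) : 0 < ⟪α, α⟫ :=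
  lt_of_le_of_ne real_inner_self_nonneg
    (fun h => R.root_ne_zero hα (inner_self_eq_zero.mp h.symm))

lemma neg_mem (R : RootSystemData V) {α : V} (hα : α ∈ R.Φ) : -α ∈ R.Φ := by
  have h := R.reflect_mem α hα α hα
  have hne : ⟪α, α⟫ ≠ 0 := ne_of_gt (R.inner_self_pos' hα)
  have h2 : (2 * ⟪α, α⟫ / ⟪α, α⟫ : ℝ) = 2 := by field_simp
  rw [h2] at h
  have e : α - (2:ℝ) • α = -α := by rw [two_smul]; abel
  rwa [e] at h

lemma pos_subset (R : RootSystemData V) : R.pos ⊆ R.Φ := Finset.filter_subset _ _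

lemma pos_or_neg (R : RootSystemData V) {α : V} (hα : α ∈ R.Φ) :
    α ∈ R.pos ∨ -α ∈ R.pos := by
  rcases R.decomp α hα with ⟨c, hc, h⟩ | ⟨c, hc, h⟩
  · exact Or.inl (Finset.mem_filter.mpr ⟨hα, c, hc, h⟩)
  · refine Or.inr (Finset.mem_filter.mpr ⟨R.neg_mem hα, c, hc, ?_⟩)
    rw [h]; simp

lemma simple_pos (R : RootSystemData V) {a : V} (ha : a ∈ R.Δ) : a ∈ R.pos := by
  refine Finset.mem_filter.mpr ⟨R.simple_subset ha, fun v => if v = a then 1 else 0, ?_, ?_⟩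
  · intro v; dsimp only; split <;> norm_num
  · simp [ite_smul, Finset.sum_ite_eq' R.Δ a, ha]

lemma not_both (R : RootSystemData V) {α : V} (h1 : α ∈ R.pos) (h2 : -α ∈ R.pos) : False := by
  obtain ⟨hΦ, c, hc, hα⟩ := Finset.mem_filter.mp h1
  obtain ⟨hΦ', d, hd, hα'⟩ := Finset.mem_filter.mp h2
  have hsum : ∑ a ∈ R.Δ, (c a + d a) • a = ∑ a ∈ R.Δ, (0:ℝ) • a := by
    simp only [add_smul, Finset.sum_add_distrib, ← hα, ← hα', zero_smul,
      Finset.sum_const_zero]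
    abel
  have hz := R.coeff_unique hsum
  apply R.root_ne_zero hΦ
  rw [hα]
  refine Finset.sum_eq_zero fun a ha => ?_
  have h := hz a ha
  have := hc a; have := hd a
  have : c a = 0 := by linarith
  rw [this, zero_smul]

/-- If a positive root reflected (along a simple root) leaves the positive roots,
then it was a positive multiple of that simple root. -/
lemma L6 (R : RootSystemData V) {a α : V} (ha : a ∈ R.Δ) (hα : α ∈ R.pos) (t : ℝ)
    (h1 : α - t • a ∈ R.Φ) (h2 : α - t • a ∉ R.pos) : ∃ r : ℝ, 0 < r ∧ α = r • a := by
  obtain ⟨hΦ, c, hc, hαc⟩ := Finset.mem_filter.mp hα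
  have hneg : -(α - t • a) ∈ R.pos := (R.pos_or_neg h1).resolve_left h2
  obtain ⟨hΦ', d, hd, hβd⟩ := Finset.mem_filter.mp hneg
  have e1 : (∑ k ∈ R.Δ, d k • k) = t • a - α := by rw [← hβd]; abel
  have hsum : ∑ k ∈ R.Δ, (c k + d k) • k = ∑ k ∈ R.Δ, ((if k = a then t else 0) : ℝ) • k := by
    have e2 : ∑ k ∈ R.Δ, ((if k = a then t else 0) : ℝ) • k = t • a := by
      simp [ite_smul, Finset.sum_ite_eq' R.Δ a, ha]
    rw [e2]
    simp only [add_smul, Finset.sum_add_distrib, ← hαc, e1]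
    abel
  have hu := R.coeff_unique hsum
  have hck : ∀ k ∈ R.Δ, k ≠ a → c k = 0 := by
    intro k hk hka
    have h := hu k hk
    simp only [hka, if_false] at h
    have := hc k; have := hd k
    linarith
  have hαa : α = c a • a := by
    rw [hαc, Finset.sum_eq_single a (fun b hb hba => by rw [hck b hb hba, zero_smul])
      (fun h => absurd ha h)]
  refine ⟨c a, ?_, hαa⟩
  rcases lt_or_eq_of_le (hc a) with h | h
  · exact h
  · exact absurd (by rw [hαa, ← h, zero_smul]) (R.root_ne_zero hΦ)

lemma pr_sub_smul (R : RootSystemData V) {a : V} (haΦ : a ∈ R.Φ) (α : V) (t : ℝ) :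
    pr (α - t • a) a = pr α a - 2 * t := by
  have hne : ⟪a, a⟫ ≠ 0 := ne_of_gt (R.inner_self_pos' haΦ)
  simp only [pr, inner_sub_left, real_inner_smul_left]
  field_simp

lemma refl_invol (R : RootSystemData V) {a : V} (haΦ : a ∈ R.Φ) (α : V) :
    (α - pr α a • a) - pr (α - pr α a • a) a • a = α := by
  rw [R.pr_sub_smul haΦ]
  have e : pr α a - 2 * pr α a = -pr α a := by ring
  rw [e, neg_smul]
  abel

lemma sum_refl (R : RootSystemData V) {a : V} (haΦ : a ∈ R.Φ) {S : Finset V}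
    {M : Type*} [AddCommMonoid M]
    (hmap : ∀ α ∈ S, α - pr α a • a ∈ S) (f : V → M) :
    ∑ α ∈ S, f (α - pr α a • a) = ∑ α ∈ S, f α :=
  Finset.sum_nbij' (fun α => α - pr α a • a) (fun α => α - pr α a • a)
    hmap hmap (fun α _ => R.refl_invol haΦ α) (fun α _ => R.refl_invol haΦ α)
    (fun α _ => rfl)

lemma step1 (R : RootSystemData V) {I : Finset V} (hI : I ⊆ R.Δ) {a : V} (ha : a ∈ I) :
    ⟪R.deltaP I, a⟫ = 0 := by
  classical
  have haΔ := hI ha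
  have haΦ := R.simple_subset haΔ
  have hne : ⟪a, a⟫ ≠ 0 := ne_of_gt (R.inner_self_pos' haΦ)
  have haspan : a ∈ Submodule.span ℝ (I : Set V) := Submodule.subset_span ha
  set S := R.pos.filter (fun b => b ∉ Submodule.span ℝ (I : Set V)) with hSdef
  have hmap : ∀ α ∈ S, α - pr α a • a ∈ S := by
    intro α hα
    rw [hSdef, Finset.mem_filter] at hα ⊢
    obtain ⟨hαpos, hαspan⟩ := hα
    have hαΦ : α ∈ R.Φ := R.pos_subset hαpos
    have h1 : α - pr α a • a ∈ R.Φ := R.reflect_mem a haΦ α hαΦ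
    constructor
    · by_contra hneg
      obtain ⟨r, hr, hαr⟩ := R.L6 haΔ hαpos (pr α a) h1 hneg
      exact hαspan (hαr ▸ Submodule.smul_mem _ r haspan)
    · intro h
      apply hαspan
      have e : α = (α - pr α a • a) + pr α a • a := by abel
      rw [e]
      exact Submodule.add_mem _ h (Submodule.smul_mem _ _ haspan)
  have hsum := R.sum_refl haΦ hmap (f := id)
  simp only [id] at hsum
  have h2 : (∑ α ∈ S, pr α a) • a = 0 := by
    have e : ∑ α ∈ S, (α - pr α a • a) = (∑ α ∈ S, α) - (∑ α ∈ S, pr α a) • a := by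
      rw [Finset.sum_sub_distrib, Finset.sum_smul]
    rw [e] at hsum
    exact sub_eq_self.mp hsum
  have h3 : ∑ α ∈ S, pr α a = 0 := by
    rcases smul_eq_zero.mp h2 with h | h
    · exact h
    · exact absurd h (R.root_ne_zero haΦ)
  have hδ : ⟪R.deltaP I, a⟫ = ∑ α ∈ S, ⟪α, a⟫ := by
    rw [RootSystemData.deltaP, sum_inner]
  rw [hδ]
  have e : ∀ α : V, ⟪α, a⟫ = pr α a * (⟪a, a⟫ / 2) := by
    intro α; rw [pr]; field_simp
  rw [Finset.sum_congr rfl (fun α _ => e α), ← Finset.sum_mul, h3, zero_mul]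

lemma step2a (R : RootSystemData V) {a : V} (ha : a ∈ R.Δ) :
    0 < ∑ α ∈ R.pos, ⟪α, a⟫ := by
  classical
  have haΦ := R.simple_subset ha
  have hpa : 0 < ⟪a, a⟫ := R.inner_self_pos' haΦ
  have hne : ⟪a, a⟫ ≠ 0 := ne_of_gt hpa
  rw [← Finset.sum_filter_add_sum_filter_not R.pos (fun α => α - pr α a • a ∈ R.pos)]
  have hT : ∑ α ∈ R.pos.filter (fun α => α - pr α a • a ∈ R.pos), ⟪α, a⟫ = 0 := by
    have hmap : ∀ α ∈ R.pos.filter (fun α => α - pr α a • a ∈ R.pos),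
        α - pr α a • a ∈ R.pos.filter (fun α => α - pr α a • a ∈ R.pos) := by
      intro α hα
      rw [Finset.mem_filter] at hα ⊢
      refine ⟨hα.2, ?_⟩
      show (α - pr α a • a) - pr (α - pr α a • a) a • a ∈ R.pos
      rw [R.refl_invol haΦ]
      exact hα.1
    have h := R.sum_refl haΦ hmap (f := fun β => ⟪β, a⟫)
    have e : ∀ α : V, ⟪α - pr α a • a, a⟫ = -⟪α, a⟫ := by
      intro α
      rw [inner_sub_left, real_inner_smul_left, pr]
      field_simp
      ring
    rw [Finset.sum_congr rfl (fun α _ => e α), Finset.sum_neg_distrib] at h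
    linarith
  rw [hT, zero_add]
  apply Finset.sum_pos
  · intro α hα
    rw [Finset.mem_filter] at hα
    obtain ⟨hαpos, hαnp⟩ := hα
    have h1 : α - pr α a • a ∈ R.Φ := R.reflect_mem a haΦ α (R.pos_subset hαpos)
    obtain ⟨r, hr, hαr⟩ := R.L6 ha hαpos (pr α a) h1 hαnp
    rw [hαr, real_inner_smul_left]
    exact mul_pos hr hpa
  · refine ⟨a, Finset.mem_filter.mpr ⟨R.simple_pos ha, ?_⟩⟩
    intro hcon
    have h2 : pr a a = 2 := by rw [pr]; field_simp
    rw [h2] at hcon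
    have e : a - (2:ℝ) • a = -a := by rw [two_smul]; abel
    rw [e] at hcon
    exact R.not_both (R.simple_pos ha) hcon

lemma span_coeff (R : RootSystemData V) {I : Finset V} (hI : I ⊆ R.Δ) {γ : V}
    (hγ : γ ∈ R.pos) (hγI : γ ∈ Submodule.span ℝ (I : Set V)) :
    ∃ c : V → ℝ, (∀ v, 0 ≤ c v) ∧ γ = ∑ k ∈ R.Δ, c k • k ∧ ∀ k ∈ R.Δ, k ∉ I → c k = 0 := by
  classical
  obtain ⟨hΦ, c, hc, hγc⟩ := Finset.mem_filter.mp hγ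
  obtain ⟨f, -, hf⟩ := Submodule.mem_span_finset.mp hγI
  set d : V → ℝ := fun k => if k ∈ I then f k else 0 with hd
  have hsum : ∑ k ∈ R.Δ, c k • k = ∑ k ∈ R.Δ, d k • k := by
    have h1 : ∑ k ∈ R.Δ, d k • k = ∑ k ∈ I, d k • k :=
      (Finset.sum_subset hI (fun k _ hkI => by simp [hd, hkI])).symm
    have h2 : ∑ k ∈ I, d k • k = γ := by
      rw [← hf]
      exact Finset.sum_congr rfl fun k hk => by simp [hd, hk]
    rw [h1, h2, ← hγc]
  have hu := R.coeff_unique hsum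
  exact ⟨c, hc, hγc, fun k hk hkI => by rw [hu k hk]; simp [hd, hkI]⟩

lemma step2b (R : RootSystemData V) {I : Finset V} (hI : I ⊆ R.Δ) {a γ : V}
    (ha : a ∈ R.Δ) (haI : a ∉ I) (hγ : γ ∈ R.pos)
    (hγI : γ ∈ Submodule.span ℝ (I : Set V)) : ⟪γ, a⟫ ≤ 0 := by
  by_contra hcon
  push_neg at hcon
  have hγΦ := R.pos_subset hγ
  have haΦ := R.simple_subset ha
  have hγγ := R.inner_self_pos' hγΦ
  have hga : 0 < ⟪a, γ⟫ := by rw [real_inner_comm]; exact hcon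
  have ht : 0 < pr a γ := by
    rw [pr]; exact div_pos (by linarith) hγγ
  obtain ⟨c, hc, hγc, hcsupp⟩ := R.span_coeff hI hγ hγI
  have hs : a - pr a γ • γ ∈ R.Φ := R.reflect_mem γ hγΦ a haΦ
  set t := pr a γ with htdef
  have hrepr : a - t • γ = ∑ k ∈ R.Δ, (((if k = a then 1 else 0) : ℝ) - t * c k) • k := by
    simp only [sub_smul, Finset.sum_sub_distrib]
    congr 1
    · simp [ite_smul, Finset.sum_ite_eq' R.Δ a, ha]
    · rw [show (fun k => (t * c k) • k) = fun k => t • (c k • k) from funext fun k => by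
        rw [mul_smul], ← Finset.smul_sum, ← hγc]
  rcases R.pos_or_neg hs with hps | hns
  · obtain ⟨hΦ', e, he, hse⟩ := Finset.mem_filter.mp hps
    have hu := R.coeff_unique (hrepr.symm.trans hse)
    have hex : ∃ k ∈ R.Δ, c k ≠ 0 := by
      by_contra hall
      push_neg at hall
      apply R.root_ne_zero hγΦ
      rw [hγc]
      exact Finset.sum_eq_zero fun k hk => by rw [hall k hk, zero_smul]
    obtain ⟨k, hk, hck⟩ := hex
    have hkI : k ∈ I := by by_contra h; exact hck (hcsupp k hk h)
    have hka : k ≠ a := fun h => haI (h ▸ hkI)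
    have h1 := hu k hk
    simp only [hka, if_false] at h1
    have h2 := he k
    have h0 : (0:ℝ) < c k := lt_of_le_of_ne (hc k) (Ne.symm hck)
    nlinarith
  · obtain ⟨hΦ', e, he, hse⟩ := Finset.mem_filter.mp hns
    have hrepr2 : ∑ k ∈ R.Δ, (((if k = a then 1 else 0) : ℝ) - t * c k) • k
        = ∑ k ∈ R.Δ, (-(e k)) • k := by
      rw [← hrepr]
      simp only [neg_smul, Finset.sum_neg_distrib, ← hse]
      abel
    have hu := R.coeff_unique hrepr2
    have h1 := hu a ha
    have hca : c a = 0 := hcsupp a ha haI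
    have h1' : (1:ℝ) = -e a := by simpa [hca] using h1
    have h2 := he a
    linarith

lemma step2 (R : RootSystemData V) {I : Finset V} (hI : I ⊆ R.Δ) {a : V}
    (ha : a ∈ R.Δ) (haI : a ∉ I) : 0 < ⟪R.deltaP I, a⟫ := by
  classical
  have hδ : ⟪R.deltaP I, a⟫
      = ∑ α ∈ R.pos.filter (fun b => b ∉ Submodule.span ℝ (I : Set V)), ⟪α, a⟫ := by
    rw [RootSystemData.deltaP, sum_inner]
  have hsplit := Finset.sum_filter_add_sum_filter_not R.pos
    (fun b => b ∈ Submodule.span ℝ (I : Set V)) (fun α => ⟪α, a⟫)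
  have h2 : ∑ α ∈ R.pos.filter (fun b => b ∈ Submodule.span ℝ (I : Set V)), ⟪α, a⟫ ≤ 0 := by
    apply Finset.sum_nonpos
    intro γ hγ
    rw [Finset.mem_filter] at hγ
    exact R.step2b hI ha haI hγ.1 hγ.2
  have h3 := R.step2a ha
  rw [hδ]
  linarith [hsplit]

end RootSystemData

/-- For `I ⊆ Δ` and `δ_P` the sum of the positive roots not in the span of
`I`, one has `⟨δ_P, β∨⟩ > 0` for every positive root `β` outside the span of `I`. -/
theorem statement8 (R : RootSystemData V) (I : Finset V) (hI : I ⊆ R.Δ) :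
    ∀ β ∈ R.pos, β ∉ Submodule.span ℝ (I : Set V) → 0 < pr (R.deltaP I) β := by
  intro β hβ hβI
  have hβΦ := R.pos_subset hβ
  obtain ⟨_, c, hc, hβc⟩ := Finset.mem_filter.mp hβ
  have hβd : ⟪R.deltaP I, β⟫ = ∑ k ∈ R.Δ, c k * ⟪R.deltaP I, k⟫ := by
    conv_lhs => rw [hβc]
    rw [inner_sum]
    exact Finset.sum_congr rfl fun k _ => real_inner_smul_right _ _ _
  have hpos : 0 < ⟪R.deltaP I, β⟫ := by
    rw [hβd]
    have hex : ∃ k ∈ R.Δ, k ∉ I ∧ 0 < c k := by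
      by_contra hall
      push_neg at hall
      apply hβI
      have e : β = ∑ k ∈ I, c k • k := by
        rw [hβc]
        refine (Finset.sum_subset hI fun k hk hkI => ?_).symm
        have h0 : c k = 0 := le_antisymm (hall k hk hkI) (hc k)
        rw [h0, zero_smul]
      rw [e]
      exact Submodule.sum_mem _ fun k hk => Submodule.smul_mem _ _ (Submodule.subset_span hk)
    obtain ⟨k0, hk0, hk0I, hck0⟩ := hex
    apply Finset.sum_pos'
    · intro k hk
      by_cases hkI : k ∈ I
      · rw [R.step1 hI hkI, mul_zero]
      · exact mul_nonneg (hc k) (le_of_lt (R.step2 hI hk hkI))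
    · exact ⟨k0, hk0, mul_pos hck0 (R.step2 hI hk0 hk0I)⟩
  rw [pr]
  exact div_pos (by linarith) (R.inner_self_pos' hβΦ)

end
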